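/- Let λ, α₁ ∈ ℝ and let w₀ ∈ ℂ with w₀ ≠ 0. Define w(t) = exp( −α₁·t + i·λ·( t·log(|w₀|²) − α₁·t² ) )·w₀. Then w(0) = w₀, |w(t)| = e^{−α₁ t}·|w₀| for all t, and for every t ∈ ℝ the function w has derivative i·λ·log(|w(t)|²)·w(t) − α₁·w(t) at t; that is, w is a global solution of the damped logarithmic ODE dw = i·λ·log(|w|²)·w dt − α₁·w dt with initial datum w₀. -/

import Mathlib

/-- Explicit global solution of the damped logarithmic ODE
`dw = i λ log(|w|²) w dt − α₁ w dt` for a nonzero initial datum `w₀`: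
with `w(t) = exp(−α₁ t + i λ (t log(|w₀|²) − α₁ t²)) w₀` one has `w(0) = w₀`,
`|w(t)| = e^{−α₁ t} |w₀|`, and `w'(t) = i λ log(|w(t)|²) w(t) − α₁ w(t)`. -/
theorem log_ODE_solution (lam α₁ : ℝ) (w₀ : ℂ) (hw₀ : w₀ ≠ 0)
    (w : ℝ → ℂ)
    (hw : ∀ t : ℝ, w t = Complex.exp ((-α₁ * t : ℝ) +
      Complex.I * (lam : ℂ) * ((t * Real.log (‖w₀‖ ^ 2) - α₁ * t ^ 2 : ℝ) : ℂ)) * w₀) :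
    w 0 = w₀ ∧
    (∀ t : ℝ, ‖w t‖ = Real.exp (-α₁ * t) * ‖w₀‖) ∧
    ∀ t : ℝ, HasDerivAt w
      (Complex.I * (lam : ℂ) * (Real.log (‖w t‖ ^ 2) : ℂ) * w t - (α₁ : ℂ) * w t) t := by
  set L : ℝ := Real.log (‖w₀‖ ^ 2) with hL
  have hnorm : ∀ t : ℝ, ‖w t‖ = Real.exp (-α₁ * t) * ‖w₀‖ := by
    intro t
    rw [hw t, norm_mul, Complex.norm_exp]
    congr 1
    simp [Complex.add_re, Complex.mul_re, Complex.mul_im, ← Complex.ofReal_pow]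
  have hlog : ∀ t : ℝ, Real.log (‖w t‖ ^ 2) = L - 2 * α₁ * t := by
    intro t
    rw [hnorm t, mul_pow, ← Real.exp_nat_mul, Real.log_mul (Real.exp_ne_zero _)
      (pow_ne_zero 2 (norm_ne_zero_iff.mpr hw₀)), Real.log_exp, hL]
    ring
  refine ⟨by simp [hw 0], hnorm, ?_⟩
  intro t
  have hf : HasDerivAt (fun s : ℝ => ((-α₁ * s : ℝ) : ℂ) +
      Complex.I * (lam : ℂ) * ((s * L - α₁ * s ^ 2 : ℝ) : ℂ))
      (((-α₁ : ℝ) : ℂ) + Complex.I * (lam : ℂ) * ((L - α₁ * (2 * t) : ℝ) : ℂ)) t := by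
    have h1 : HasDerivAt (fun s : ℝ => -α₁ * s) (-α₁) t := by
      simpa using (hasDerivAt_id t).const_mul (-α₁)
    have h2 : HasDerivAt (fun s : ℝ => s * L - α₁ * s ^ 2) (L - α₁ * (2 * t)) t := by
      have := ((hasDerivAt_id t).mul_const L).sub ((hasDerivAt_pow 2 t).const_mul α₁)
      exact this.congr_deriv (by norm_num)
    exact (h1.ofReal_comp).add ((h2.ofReal_comp).const_mul (Complex.I * (lam : ℂ)))
  have hd : HasDerivAt w
      ((((-α₁ : ℝ) : ℂ) + Complex.I * (lam : ℂ) * ((L - α₁ * (2 * t) : ℝ) : ℂ)) * w t) t := by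
    have h := (hf.cexp.mul_const w₀)
    have hw' : w = fun y : ℝ => Complex.exp (((-α₁ * y : ℝ) : ℂ) +
        Complex.I * (lam : ℂ) * ((y * L - α₁ * y ^ 2 : ℝ) : ℂ)) * w₀ := funext hw
    rw [hw']
    exact h.congr_deriv (by beta_reduce; ring)
  convert hd using 1
  rw [hlog t]
  push_cast
  ring
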